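/- Let g = X - X⁵ + X⁹ be a formal power series over ℚ and let f be the formal power series over ℚ with zero constant coefficient such that substituting f into g yields the identity series X. Then the coefficient of f at X⁵⁷ is strictly negative, while all coefficients of f at X^k with k < 57 are nonnegative. -/

import Mathlib

set_option maxHeartbeats 16000000
set_option maxRecDepth 16000

noncomputable def sP : PowerSeries ℚ := PowerSeries.X + PowerSeries.X ^ 5 + (4) * PowerSeries.X ^ 9 + (21) * PowerSeries.X ^ 13 + (123) * PowerSeries.X ^ 17 + (759) * PowerSeries.X ^ 21 + (4797) * PowerSeries.X ^ 25 + (30504) * PowerSeries.X ^ 29 + (192372) * PowerSeries.X ^ 33 + (1184859) * PowerSeries.X ^ 37 + (6976277) * PowerSeries.X ^ 41 + (37759330) * PowerSeries.X ^ 45 + (170248455) * PowerSeries.X ^ 49 + (393521445) * PowerSeries.X ^ 53 + (-3969959727) * PowerSeries.X ^ 57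

noncomputable def sP2 : PowerSeries ℚ := PowerSeries.X ^ 2 + (2) * PowerSeries.X ^ 6 + (9) * PowerSeries.X ^ 10 + (50) * PowerSeries.X ^ 14 + (304) * PowerSeries.X ^ 18 + (1932) * PowerSeries.X ^ 22 + (12537) * PowerSeries.X ^ 26 + (81840) * PowerSeries.X ^ 30 + (531135) * PowerSeries.X ^ 34 + (3386682) * PowerSeries.X ^ 38 + (20898559) * PowerSeries.X ^ 42 + (121815540) * PowerSeries.X ^ 46 + (638229657) * PowerSeries.X ^ 50 + (2598769460) * PowerSeries.X ^ 54 + (2085894024) * PowerSeries.X ^ 58 + (45341239104) * PowerSeries.X ^ 62 + (260191271538) * PowerSeries.X ^ 66 + (1432244231958) * PowerSeries.X ^ 70 + (7645711910547) * PowerSeries.X ^ 74 + (39195048461790) * PowerSeries.X ^ 78 + (189569639015911) * PowerSeries.X ^ 82 + (839485630924774) * PowerSeries.X ^ 86 + (3206284430250592) * PowerSeries.X ^ 90 + (8939879375843844) * PowerSeries.X ^ 94 + (3311671168757967) * PowerSeries.X ^ 98 + (-165813202795770870) * PowerSeries.X ^ 102 + (-1196899892193055545) * PowerSeries.X ^ 106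 + (-3124528576721691030) * PowerSeries.X ^ 110 + (15760580234001914529) * PowerSeries.X ^ 114

noncomputable def sP4 : PowerSeries ℚ := PowerSeries.X ^ 4 + (4) * PowerSeries.X ^ 8 + (22) * PowerSeries.X ^ 12 + (136) * PowerSeries.X ^ 16 + (889) * PowerSeries.X ^ 20 + (5980) * PowerSeries.X ^ 24 + (40774) * PowerSeries.X ^ 28 + (279004) * PowerSeries.X ^ 32 + (1900912) * PowerSeries.X ^ 36 + (12799380) * PowerSeries.X ^ 40 + (84443396) * PowerSeries.X ^ 44 + (539500780) * PowerSeries.X ^ 48 + (3274899945) * PowerSeries.X ^ 52 + (18196457624) * PowerSeries.X ^ 56 + (84044481424) * PowerSeries.X ^ 60 + (536296591848) * PowerSeries.X ^ 64 + (3218356382291) * PowerSeries.X ^ 68 + (19048806157888) * PowerSeries.X ^ 72 + (111159101551914) * PowerSeries.X ^ 76 + (636981352334856) * PowerSeries.X ^ 80 + (3567652821722595) * PowerSeries.X ^ 84 + (19436915927019492) * PowerSeries.X ^ 88 + (102563924465408544) * PowerSeries.X ^ 92 + (523053233165842404) * PowerSeries.X ^ 96 + (2588059429408725129) * PowerSeries.X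 ^ 100 + (12644643159398993760) * PowerSeries.X ^ 104 + (63419317298287998864) * PowerSeries.X ^ 108 + (341607461600727017424) * PowerSeries.X ^ 112 + (1942757885096020830312) * PowerSeries.X ^ 116 + (9594523333363886241948) * PowerSeries.X ^ 120 + (47058690726124221747992) * PowerSeries.X ^ 124 + (223262589195006484320728) * PowerSeries.X ^ 128 + (1018138032001325187913682) * PowerSeries.X ^ 132 + (4446775636742171176174936) * PowerSeries.X ^ 136 + (18636782596113122377084894) * PowerSeries.X ^ 140 + (76096325931748289549487328) * PowerSeries.X ^ 144 + (314728773105860442990040611) * PowerSeries.X ^ 148 + (1397383485659939902685814084) * PowerSeries.X ^ 152 + (6840638845510227792141175170) * PowerSeries.X ^ 156 + (34772907695467881578254744428) * PowerSeries.X ^ 160 + (161952495065783449441720696471) * PowerSeries.X ^ 164 + (589869865242104302809579281456) * PowerSeries.X ^ 168 + (1356396656134789500721427478930) * PowerSeries.X ^ 172 + (2871553506068161712091662227796) * PowerSeries.X ^ 176 + (-5503416781874994394541079544256) * PowerSeries.X ^ 180 + (-96436094172605389951257831367284) * PowerSeries.X ^ 184 + (-634959986609364767244080565203160) * PowerSeries.X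 ^ 188 + (-2962795318301567579329822966306284) * PowerSeries.X ^ 192 + (-9899474551578778769657918087353353) * PowerSeries.X ^ 196 + (-16073212300397541377908638958569168) * PowerSeries.X ^ 200 + (64766529359114124781748609636266566) * PowerSeries.X ^ 204 + (658024159064479362746025853833695232) * PowerSeries.X ^ 208 + (2573133251325699805353023139127444311) * PowerSeries.X ^ 212 + (2252871260225471816822260341420582240) * PowerSeries.X ^ 216 + (-27964994739203310999213011514096565710) * PowerSeries.X ^ 220 + (-98488766653708036334089126844811949740) * PowerSeries.X ^ 224 + (248395889312411842931829643237421291841) * PowerSeries.X ^ 228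

noncomputable def sP5 : PowerSeries ℚ := PowerSeries.X ^ 5 + (5) * PowerSeries.X ^ 9 + (30) * PowerSeries.X ^ 13 + (195) * PowerSeries.X ^ 17 + (1320) * PowerSeries.X ^ 21 + (9126) * PowerSeries.X ^ 25 + (63705) * PowerSeries.X ^ 29 + (445485) * PowerSeries.X ^ 33 + (3101085) * PowerSeries.X ^ 37 + (21360680) * PowerSeries.X ^ 41 + (144620504) * PowerSeries.X ^ 45 + (954023850) * PowerSeries.X ^ 49 + (6051467700) * PowerSeries.X ^ 53 + (36059658645) * PowerSeries.X ^ 57 + (192016739160) * PowerSeries.X ^ 61 + (1204936583571) * PowerSeries.X ^ 65 + (7404802387845) * PowerSeries.X ^ 69 + (45093517889655) * PowerSeries.X ^ 73 + (271630743931470) * PowerSeries.X ^ 77 + (1613573989667495) * PowerSeries.X ^ 81 + (9423606770433298) * PowerSeries.X ^ 85 + (53961384776904805) * PowerSeries.X ^ 89 + (302388803094035290) * PowerSeries.X ^ 93 + (1658171164312305055) * PowerSeries.X ^ 97 + (8928704761176666175) * PowerSeries.X ^ 101 + (47661182003731546444) * PowerSeries.X ^ 105 + (256437119943486466435) * PowerSeries.X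 ^ 109 + (1414998468885694721065) * PowerSeries.X ^ 113 + (7964919308178497566570) * PowerSeries.X ^ 117 + (42380622956869449222555) * PowerSeries.X ^ 121 + (222711388641333487426397) * PowerSeries.X ^ 125 + (1148272449892592610852580) * PowerSeries.X ^ 129 + (5803104133268568060874365) * PowerSeries.X ^ 133 + (28779042579937256120652440) * PowerSeries.X ^ 137 + (140589024652728297992012950) * PowerSeries.X ^ 141 + (681407687357038754444934774) * PowerSeries.X ^ 145 + (3309497687592794379233921420) * PowerSeries.X ^ 149 + (16254177701770024408431255460) * PowerSeries.X ^ 153 + (80828302523053867645350138675) * PowerSeries.X ^ 157 + (401620968483186951724538161755) * PowerSeries.X ^ 161 + (1939329278816759799490555725902) * PowerSeries.X ^ 165 + (8816888437080281905428846121260) * PowerSeries.X ^ 169 + (37519021964502480626707341798345) * PowerSeries.X ^ 173 + (160387033773098800640414332899785) * PowerSeries.X ^ 177 + (659939098062674297280816038659095) * PowerSeries.X ^ 181 + (2656659947230489164507155333972634) * PowerSeries.X ^ 185 + (10680488980187955368861029686042200) * PowerSeries.X ^ 189 + (44116182884277189281185804033732380) * PowerSeries.X ^ 193 + (190958266974326340692774578443001170)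 * PowerSeries.X ^ 197 + (853857849557758556616613070280098415) * PowerSeries.X ^ 201 + (3724496149530913677836240783640936842) * PowerSeries.X ^ 205 + (14428044539419871538824176985082968015) * PowerSeries.X ^ 209 + (41877058024852194108050102735233567445) * PowerSeries.X ^ 213 + (38032317755416323939357643087454720545) * PowerSeries.X ^ 217 + (-489970382381529843181367296485599711780) * PowerSeries.X ^ 221 + (-3834366522947671738232430520501109461355) * PowerSeries.X ^ 225 + (-17955984948552635276568913238289715409610) * PowerSeries.X ^ 229 + (-82820755018351192932084816562852116246315) * PowerSeries.X ^ 233 + (-282110907544895462247250088876822954096880) * PowerSeries.X ^ 237 + (-592863721241093171662292979592839881847705) * PowerSeries.X ^ 241 + (679425216769536646880006988248765241344520) * PowerSeries.X ^ 245 + (14511409670975268763131781529321629954553115) * PowerSeries.X ^ 249 + (82276111369909510573854760479092824670019465) * PowerSeries.X ^ 253 + (269697073185167639456053389081106631093813370) * PowerSeries.X ^ 257 + (260962537462450513590397488765207147023639985) * PowerSeries.X ^ 261 + (-2664908721628155096725792929813532367027189930) * PowerSeries.X ^ 265 + (-16075670686542823433899016990394887492808022590) * PowerSeries.X ^ 269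 + (-27336931314858026479344007501222100170550124600) * PowerSeries.X ^ 273 + (114551477494358140248475195534964142562791342525) * PowerSeries.X ^ 277 + (488745546471401824328233188503122524195185151225) * PowerSeries.X ^ 281 + (-986121676922624737677213290077340427941083687407) * PowerSeries.X ^ 285

noncomputable def sP8 : PowerSeries ℚ := PowerSeries.X ^ 8 + (8) * PowerSeries.X ^ 12 + (60) * PowerSeries.X ^ 16 + (448) * PowerSeries.X ^ 20 + (3350) * PowerSeries.X ^ 24 + (25056) * PowerSeries.X ^ 28 + (187000) * PowerSeries.X ^ 32 + (1389128) * PowerSeries.X ^ 36 + (10244793) * PowerSeries.X ^ 40 + (74805200) * PowerSeries.X ^ 44 + (539067620) * PowerSeries.X ^ 48 + (3818495664) * PowerSeries.X ^ 52 + (26441975366) * PowerSeries.X ^ 56 + (177543176192) * PowerSeries.X ^ 60 + (1140580180260) * PowerSeries.X ^ 64 + (7510029302120) * PowerSeries.X ^ 68 + (49291493510552) * PowerSeries.X ^ 72 + (321599007552144) * PowerSeries.X ^ 76 + (2082220077225108) * PowerSeries.X ^ 80 + (13359521598195224) * PowerSeries.X ^ 84 + (84839036712131908) * PowerSeries.X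 ^ 88 + (532796899737735472) * PowerSeries.X ^ 92 + (3307509262997375316) * PowerSeries.X ^ 96 + (20300623348781090408) * PowerSeries.X ^ 100 + (123333101807441224433) * PowerSeries.X ^ 104 + (743352513707818036960) * PowerSeries.X ^ 108 + (4459362195746391768936) * PowerSeries.X ^ 112 + (26711548070020836734328) * PowerSeries.X ^ 116 + (159772270251387492253080) * PowerSeries.X ^ 120 + (945111274482587337725912) * PowerSeries.X ^ 124 + (5543400510255940965645672) * PowerSeries.X ^ 128 + (32232352505515009575204064) * PowerSeries.X ^ 132 + (185816140189950835614697363) * PowerSeries.X ^ 136 + (1062584668756497205894481688) * PowerSeries.X ^ 140 + (6032502771114978907314526472) * PowerSeries.X ^ 144 + (34037598465423080203492958640) * PowerSeries.X ^ 148 + (191086869661638899190412725354) * PowerSeries.X ^ 152 + (1068187694544753294649099702824) * PowerSeries.X ^ 156 + (5945734409608224249612983110008) * PowerSeries.X ^ 160 + (32917643421099088503334620409424) * PowerSeries.X ^ 164 + (180897083818634338935191762674931) * PowerSeries.X ^ 168 + (984783563530519014041368397945976) * PowerSeries.X ^ 172 + (5310199573682339463582379798960996) * PowerSeries.X ^ 176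 + (28449599681138088403552304409549664) * PowerSeries.X ^ 180 + (151404974375186267780418357781435560) * PowerSeries.X ^ 184 + (801043280319645410707344589783908120) * PowerSeries.X ^ 188 + (4216187288802308170971918298109221596) * PowerSeries.X ^ 192 + (22084044278500341632286782458374953784) * PowerSeries.X ^ 196 + (115089406243413278778273029366486326233) * PowerSeries.X ^ 200 + (596215216138146806212281451363299155000) * PowerSeries.X ^ 204 + (3065870052298607588787073327788256829656) * PowerSeries.X ^ 208 + (15624171921863393026801017066459175066408) * PowerSeries.X ^ 212 + (78827230235277810503970106202682319765832) * PowerSeries.X ^ 216 + (393810705320855461704450650618144518059360) * PowerSeries.X ^ 220 + (1951635502776925620789682390126354451556552) * PowerSeries.X ^ 224 + (9617511611774410333864658108081215048682064) * PowerSeries.X ^ 228 + (47173451317096803929901780245094288903971976) * PowerSeries.X ^ 232 + (229957640797584378589974398371965413204388384) * PowerSeries.X ^ 236 + (1114294555102059339570656419251615185089409724) * PowerSeries.X ^ 240 + (5360179194911915082599557439659097848765140488) * PowerSeries.X ^ 244 + (25545156233157738525000562426507151618505311136) * PowerSeries.X ^ 248 + (120324888869212014992899170067697191271999764936) * PowerSeries.X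 ^ 252 + (559008529837672223787672525018394524116650166640) * PowerSeries.X ^ 256 + (2559168490424944167067841707439915534227511756304) * PowerSeries.X ^ 260 + (11557010028997729656253442746106496288119211606282) * PowerSeries.X ^ 264 + (51646369960385941839563215670680935960560782591032) * PowerSeries.X ^ 268 + (229352742613502733258149405863509577583665931785368) * PowerSeries.X ^ 272 + (1014660364816150328339750197814131295256493212122784) * PowerSeries.X ^ 276 + (4462844201320010517666455999533466341351901764413150) * PowerSeries.X ^ 280 + (19392720486126179060421887986084236649609270168542248) * PowerSeries.X ^ 284 + (82735661172785314616018457276364006200189233724624920) * PowerSeries.X ^ 288 + (345168650657683593988430913550549184449643667363634056) * PowerSeries.X ^ 292 + (1392825214044313935415154430133750212105338076679221171) * PowerSeries.X ^ 296 + (5381505333070789460144564958560064310747129161247254288) * PowerSeries.X ^ 300 + (19724799071383369050012506471379204031633570964335626036) * PowerSeries.X ^ 304 + (68243289176784969322577313999279615177236864538699485304) * PowerSeries.X ^ 308 + (224199800433028142007884046225138541969088454659075272122) * PowerSeries.X ^ 312 + (717661309795353710152859219151705592768847285743986522312) * PowerSeries.X ^ 316 + (2333136905068475595807001682420954404092764271779542970604)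 * PowerSeries.X ^ 320 + (7772446610255102717475092878488776095008304100580956849024) * PowerSeries.X ^ 324 + (23848601705958978876449291144010686587871247908104888238839) * PowerSeries.X ^ 328 + (44420070024193611560188499214529098998771009645546720212816) * PowerSeries.X ^ 332 + (-153675553740700631184789263940379094533846043486733677316296) * PowerSeries.X ^ 336 + (-2389722380554302314443242946673911556298985210897002864335360) * PowerSeries.X ^ 340 + (-17951650503298564840498845293298532550725734841135418186048030) * PowerSeries.X ^ 344 + (-107551007400347790680060894535086585662209006322126890252028280) * PowerSeries.X ^ 348 + (-533212066479324725145568588006118547487594163636367191370117764) * PowerSeries.X ^ 352 + (-2177891992532083537418771836549465775377532141724521406669934784) * PowerSeries.X ^ 356 + (-6790517323855705763256193128418586778570586242553744894681962272) * PowerSeries.X ^ 360 + (-11109361164166016149253120166919623194528489891358200029989367368) * PowerSeries.X ^ 364 + (38363319385367709103646400230876757534336416675816994177303869124) * PowerSeries.X ^ 368 + (451591724625949279596735962200677894280995879106283049807668576520) * PowerSeries.X ^ 372 + (2431895268885644883391884095404037899407211072850082046301786110920) * PowerSeries.X ^ 376 + (9173057962477414272180623270647245707226419633886176836883655661632) *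 PowerSeries.X ^ 380 + (24645071557915002499512920262753493623798431775912223918814742603612) * PowerSeries.X ^ 384 + (32609332416742622648337169590590921358001960072250041959153536338800) * PowerSeries.X ^ 388 + (-142901258427378933184438119055751449910832448772546757805525119237273) * PowerSeries.X ^ 392 + (-1557011195603267012764447911180759621632734319795497891847472204002376) * PowerSeries.X ^ 396 + (-8209311156316263466492136732607758295497456152394193444147020660775288) * PowerSeries.X ^ 400 + (-25314216329337373672657492077488323507366649717999432343841817986482384) * PowerSeries.X ^ 404 + (-29478350702736008869985398481093307575948834109673786572473252519554554) * PowerSeries.X ^ 408 + (200787668708263175452946352973223275514000524437698272383154635789859080) * PowerSeries.X ^ 412 + (1515718578246274439116207970189924056863858532259948510668961619931341696) * PowerSeries.X ^ 416 + (5055245310138902081621339238699023957827212455448926360920248588367783296) * PowerSeries.X ^ 420 + (4211594997779326343718426914912799035025159097479229341338347186973367255) * PowerSeries.X ^ 424 + (-45951999312698838042619015522581516880701427075523108099127377211106018416) * PowerSeries.X ^ 428 + (-236280383151571474050592999333592160569335301589494117879238532349960437368) * PowerSeries.X ^ 432 + (-305951514238296551651041829742160527874506577850696838482577177311355434856) *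 PowerSeries.X ^ 436 + (1616587351630055428590833627761918712553529773616066555043767437444326902002) * PowerSeries.X ^ 440 + (6627683603063295590327299017169941196138251262207598895506990617260617838480) * PowerSeries.X ^ 444 + (-4192742318754098189903442294588074145120492804435465842484026182279200676620) * PowerSeries.X ^ 448 + (-48928409560460839860036451446009870274850865398300925939770216511969528142680) * PowerSeries.X ^ 452 + (61700517827303956015961540861086395125065025542112606533964555345449293169281) * PowerSeries.X ^ 456

noncomputable def sP9 : PowerSeries ℚ := PowerSeries.X ^ 9 + (9) * PowerSeries.X ^ 13 + (72) * PowerSeries.X ^ 17 + (561) * PowerSeries.X ^ 21 + (4329) * PowerSeries.X ^ 25 + (33201) * PowerSeries.X ^ 29 + (253113) * PowerSeries.X ^ 33 + (1916226) * PowerSeries.X ^ 37 + (14384403) * PowerSeries.X ^ 41 + (106861174) * PowerSeries.X ^ 45 + (783775395) * PowerSeries.X ^ 49 + (5657946255) * PowerSeries.X ^ 53 + (40029618372) * PowerSeries.X ^ 57 + (275860078200) * PowerSeries.X ^ 61 + (1834021581480) * PowerSeries.X ^ 65 + (12324450903510) * PowerSeries.X ^ 69 + (82486442658096) * PowerSeries.X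 ^ 73 + (548637612133311) * PowerSeries.X ^ 77 + (3621719210957857) * PowerSeries.X ^ 81 + (23703556843128294) * PowerSeries.X ^ 85 + (153675907170569595) * PowerSeries.X ^ 89 + (986317731615971079) * PowerSeries.X ^ 93 + (6264927374897670867) * PowerSeries.X ^ 97 + (39389286057756663744) * PowerSeries.X ^ 101 + (245331873647027512443) * PowerSeries.X ^ 105 + (1516076681198997464127) * PowerSeries.X ^ 109 + (9316198989016851933918) * PowerSeries.X ^ 113 + (57049935368693181619905) * PowerSeries.X ^ 117 + (348266785576446369650151) * PowerSeries.X ^ 121 + (2107867819066085285844291) * PowerSeries.X ^ 125 + (12661362779309604427338645) * PowerSeries.X ^ 129 + (75471315685064121732337080) * PowerSeries.X ^ 133 + (446468281076477969692471035) * PowerSeries.X ^ 137 + (2622122867623468485078321810) * PowerSeries.X ^ 141 + (15297171712909545404606526009) * PowerSeries.X ^ 145 + (88709612359578896380050802557) * PowerSeries.X ^ 149 + (511728554811656201515214489214) * PowerSeries.X ^ 153 + (2937900790974131937517572671076) * PowerSeries.X ^ 157 + (16787676107704985170219696456584) * PowerSeries.X ^ 161 + (95425978210183908820129701778338) * PowerSeries.X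 ^ 165 + (539023569487002478162590473685933) * PowerSeries.X ^ 169 + (3022415639942816499719182976236122) * PowerSeries.X ^ 173 + (16821110373667082910925824385175385) * PowerSeries.X ^ 177 + (93054090601398997664079115927923513) * PowerSeries.X ^ 181 + (511724714853333971701999313455426038) * PowerSeries.X ^ 185 + (2798668998767396748745819375991593590) * PowerSeries.X ^ 189 + (15228028445974789755999738755337965964) * PowerSeries.X ^ 193 + (82450667445732001436193875510592657084) * PowerSeries.X ^ 197 + (444182449700388707649589948209127590903) * PowerSeries.X ^ 201 + (2379938547538345789932536892790920834936) * PowerSeries.X ^ 205 + (12674206352205063543584646062114232888081) * PowerSeries.X ^ 209 + (67037975479950470041896305123240851530219) * PowerSeries.X ^ 213 + (352025217277735996021753217542714782308208) * PowerSeries.X ^ 217 + (1835389716496863917668526584373337902111094) * PowerSeries.X ^ 221 + (9508340844247689612996184090106292496742028) * PowerSeries.X ^ 225 + (48992078064590983978488138116685817812796488) * PowerSeries.X ^ 229 + (251173271100409845817702513460860836481992660) * PowerSeries.X ^ 233 + (1280662891280970499461513553996118616891525843) * PowerSeries.X ^ 237 + (6493549443134838503572340621216042326985808981) * PowerSeries.X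 ^ 241 + (32725011115126632599896203702387177738949625202) * PowerSeries.X ^ 245 + (163792330552197739515537415948501120927491407883) * PowerSeries.X ^ 249 + (813511438392235052073960289883629949333076934281) * PowerSeries.X ^ 253 + (4006949352053263615956501154573006520613459098781) * PowerSeries.X ^ 257 + (19568937372925018694720966189561609401913742375852) * PowerSeries.X ^ 261 + (94802069239359042320154200203972720089134663731446) * PowerSeries.X ^ 265 + (456027898762889818468449630286833483631573885852698) * PowerSeries.X ^ 269 + (2180468619516644511563741846706415312176358446360552) * PowerSeries.X ^ 273 + (10367669650159942121446906905103560274234388309902830) * PowerSeries.X ^ 277 + (48985257950441024680436679581254362318818100560920632) * PowerSeries.X ^ 281 + (229599437765398885427244757738328669350966911608202708) * PowerSeries.X ^ 285 + (1065837425984990624699542949753119335238608217198332318) * PowerSeries.X ^ 289 + (4895144393547358406935279814807715359462263167081312546) * PowerSeries.X ^ 293 + (22204215491978063548381458995922476120871242972521811937) * PowerSeries.X ^ 297 + (99376555579823900008218493461304299818433687090183274851) * PowerSeries.X ^ 301 + (438860795584712830417559492995028704148693547598817654928) * PowerSeries.X ^ 305 + (1914775636014558170103117936975648335030733408797542945839)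 * PowerSeries.X ^ 309 + (8272418670832765375586753825758216569074218106531408617449) * PowerSeries.X ^ 313 + (35465742507007570701258266056668543726245695377027308865687) * PowerSeries.X ^ 317 + (150932463153310549808693273006501618640221995160121938014527) * PowerSeries.X ^ 321 + (635550739655526030119169198729148006805112979947682949191398) * PowerSeries.X ^ 325 + (2629096583759205977369274563200882993530555541805103966325407) * PowerSeries.X ^ 329 + (10583075152801977765011988332940993701035043225793163210863600) * PowerSeries.X ^ 333 + (41058874506235109169823786132773016902471953008263664070505471) * PowerSeries.X ^ 337 + (152112166439229784968824187425459625626734523017334614868011569) * PowerSeries.X ^ 341 + (531189511034356990364096181422392280396288442333925710083495028) * PowerSeries.X ^ 345 + (1712306753891403181484409936639236628376881701253590930554896120) * PowerSeries.X ^ 349 + (4990004125505874108982972153685303869348615480645851223384224024) * PowerSeries.X ^ 353 + (12759656710820315084976009709468017443281864304776561560003339378) * PowerSeries.X ^ 357 + (27126412694173085053613479375973914228446398059014485160382019040) * PowerSeries.X ^ 361 + (37793690057838202472424510002200156050666441803217176108361559329) * PowerSeries.X ^ 365 + (-79380935997840299225661299632458568283107859414310266158988706517) * PowerSeries.X ^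 369 + (-1472296933739596187566971962554800475740202468577452594809247479534) * PowerSeries.X ^ 373 + (-13346501843377125088391419176088150688074520831343342014586706658127) * PowerSeries.X ^ 377 + (-97358896810683869636284384397442098885428582058642246011214323661523) * PowerSeries.X ^ 381 + (-598531325963543908765549285488456600476807196091319340744845654306487) * PowerSeries.X ^ 385 + (-3153311095058424255792726119552285598445227537559263582424891957748184) * PowerSeries.X ^ 389 + (-14386298685987848537764747232111133390025308266907100014194706381212883) * PowerSeries.X ^ 393 + (-56139208251761056043364569578350665697376415113979257127143547092392507) * PowerSeries.X ^ 397 + (-171444380212180664087369192815824906372358237087555369698903400106486130) * PowerSeries.X ^ 401 + (-257068848750490515050228166024148203966397527469018281724458801017439497) * PowerSeries.X ^ 405 + (1239644277284017897408094267350545507160661640192958343312725599327324543) * PowerSeries.X ^ 409 + (13833555154116489276978241854061902312610899639961880991336005272773794367) * PowerSeries.X ^ 413 + (77929477544044123207490341792583161017020087745357357963982553738783915703) * PowerSeries.X ^ 417 + (312960396035550312794433883947637675753001832095401666720786324749332326878) * PowerSeries.X ^ 421 + (878715029225256554139846105201900523405932640116442085501489894544025101957) * PowerSeries.X ^ 425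 + (1055915210792327612224735585022854669332518938349998342893095103598641906894) * PowerSeries.X ^ 429 + (-5772625578321671945526501920631220378861530668822145877110580166712451202175) * PowerSeries.X ^ 433 + (-50822637837108338051552739409927724407306221604141888324826816692017537010923) * PowerSeries.X ^ 437 + (-243911694126465426929243051492304959289376010454366698413471907256711163010940) * PowerSeries.X ^ 441 + (-863561461699628198350572048606673144146316720766573969082929764565937963994296) * PowerSeries.X ^ 445 + (-1962093214610974254885542795684730869210791102747250013276690165595262798127132) * PowerSeries.X ^ 449 + (1395501428459672616749886499795804154828686756601999847842586020903041633330818) * PowerSeries.X ^ 453 + (40132579133938932246070307289355433184252688270582031335224032898777259060446525) * PowerSeries.X ^ 457 + (204874412311713432101176145782405968678851059711712105156855243165202684511486398) * PowerSeries.X ^ 461 + (576610458744759123113108826871605877409007194584306331346915680831350642294457187) * PowerSeries.X ^ 465 + (232834800509125387682892079208749097558020662875680417945844661897062454765607863) * PowerSeries.X ^ 469 + (-6593463327749828198969168071567932713175687908706152019928009231930496909569234800) * PowerSeries.X ^ 473 + (-34416581177434994675913050999431830235199929941674159665730255033210685814560444432) * PowerSeries.X ^ 477 + (-69454323386925888238951605286444482060031070209465867137139424564076601505531574954)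 * PowerSeries.X ^ 481 + (132138076327740861048325706772917532437742995028345494455500018788907055582287559896) * PowerSeries.X ^ 485 + (1267749968486915375276324802127526068691557166467501080718704780096523842330224015598) * PowerSeries.X ^ 489 + (2552583008943563539388200100837833678010837017045652848541644177609834334723664075021) * PowerSeries.X ^ 493 + (-5940523014211521332854070833008712509289440431434131776715646396589933030489328149517) * PowerSeries.X ^ 497 + (-33961786922711934633520199882775213657988085081255265115154068932746085639936533428530) * PowerSeries.X ^ 501 + (7895057552156457389590529473496309167358302658042414142919721587033612688169094420995) * PowerSeries.X ^ 505 + (218524292393840219030558657616731362315108901132646551483659560584913120199836798579405) * PowerSeries.X ^ 509 + (-244948570909442246371146686399377890114117279658413390438836342366896266602661763546287) * PowerSeries.X ^ 513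

noncomputable def sR : PowerSeries ℚ := (83843339040) * PowerSeries.X ^ 3 + (629084997909) * PowerSeries.X ^ 7 + (4919648515665) * PowerSeries.X ^ 11 + (37392924768441) * PowerSeries.X ^ 15 + (277006868201841) * PowerSeries.X ^ 19 + (2008145221290362) * PowerSeries.X ^ 23 + (14279950072694996) * PowerSeries.X ^ 27 + (99714522393664790) * PowerSeries.X ^ 31 + (683928928521935789) * PowerSeries.X ^ 35 + (4606756210585365812) * PowerSeries.X ^ 39 + (30460581296579997569) * PowerSeries.X ^ 43 + (197670691643295965999) * PowerSeries.X ^ 47 + (1259639561255510997692) * PowerSeries.X ^ 51 + (7901200520131157212853) * PowerSeries.X ^ 55 + (49085016060514684053335) * PowerSeries.X ^ 59 + (305886162619576920427596) * PowerSeries.X ^ 63 + (1885156430424751798417894) * PowerSeries.X ^ 67 + (11513090329417011816486065) * PowerSeries.X ^ 71 + (69668211551795553671462715) * PowerSeries.X ^ 75 + (417689238496540713571818595) * PowerSeries.X ^ 79 + (2481533842970740187086308860) * PowerSeries.X ^ 83 + (14615764025552506650161591235) * PowerSeries.X ^ 87 + (85400114671986102000816881137) * PowerSeries.X ^ 91 +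 (495474377109886177106783233754) * PowerSeries.X ^ 95 + (2857072488451078069872222532401) * PowerSeries.X ^ 99 + (16386055139221798218495158294829) * PowerSeries.X ^ 103 + (93486648931367149020639146052436) * PowerSeries.X ^ 107 + (530206681049922196257161627564673) * PowerSeries.X ^ 111 + (2984896617978314019092475634437777) * PowerSeries.X ^ 115 + (16660723339893984110285410052275600) * PowerSeries.X ^ 119 + (92394151503336323366798299889264418) * PowerSeries.X ^ 123 + (509068054906103482537492158121453404) * PowerSeries.X ^ 127 + (2787988509787208793376958346305551390) * PowerSeries.X ^ 131 + (15183912263090512566718552951304233584) * PowerSeries.X ^ 135 + (82259709178757675095501100932149655914) * PowerSeries.X ^ 139 + (443328591850830949092973335138847492488) * PowerSeries.X ^ 143 + (2376214051388814876254700652007279898094) * PowerSeries.X ^ 147 + (12659778307665643672045821885129149920066) * PowerSeries.X ^ 151 + (66996098421925617847788255020505617962774) * PowerSeries.X ^ 155 + (351987184959980579697813859899627327587663) * PowerSeries.X ^ 159 + (1835879686879245447511707951669823501822874) * PowerSeries.X ^ 163 + (9512175210770637284734416520626793606203383) * PowerSeries.X ^ 167 + (49010034049539536613764707029924107528206098)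 * PowerSeries.X ^ 171 + (251256091855428197010634598277423688598238975) * PowerSeries.X ^ 175 + (1280945002188515394923760804084995439845622723) * PowerSeries.X ^ 179 + (6494142306856079596744002914195635166867656686) * PowerSeries.X ^ 183 + (32724331689909863063249323695398928973708280682) * PowerSeries.X ^ 187 + (163777819142526764246774284166971799297536854768) * PowerSeries.X ^ 191 + (813429162280865142563386435123150856508406914816) * PowerSeries.X ^ 195 + (4006679654980078448317045101183925413982365285411) * PowerSeries.X ^ 199 + (19568676410387556244207375792072844194766718735867) * PowerSeries.X ^ 203 + (94804734148080670475250925996902533621501690921376) * PowerSeries.X ^ 207 + (456043974433576361291883529303823878519066693875288) * PowerSeries.X ^ 211 + (2180495956447959369590221190713916534276528996485152) * PowerSeries.X ^ 215 + (10367555098682447763306658429908025310091825518560305) * PowerSeries.X ^ 219 + (48984769204894553278612351348065859196293905375769407) * PowerSeries.X ^ 223 + (229600423887075808051982434951618746691394852691890115) * PowerSeries.X ^ 227 + (1065837425984990624699542949753119335238608217198332318) * PowerSeries.X ^ 231 + (4895144393547358406935279814807715359462263167081312546) * PowerSeries.X ^ 235 + (22204215491978063548381458995922476120871242972521811937) *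 PowerSeries.X ^ 239 + (99376555579823900008218493461304299818433687090183274851) * PowerSeries.X ^ 243 + (438860795584712830417559492995028704148693547598817654928) * PowerSeries.X ^ 247 + (1914775636014558170103117936975648335030733408797542945839) * PowerSeries.X ^ 251 + (8272418670832765375586753825758216569074218106531408617449) * PowerSeries.X ^ 255 + (35465742507007570701258266056668543726245695377027308865687) * PowerSeries.X ^ 259 + (150932463153310549808693273006501618640221995160121938014527) * PowerSeries.X ^ 263 + (635550739655526030119169198729148006805112979947682949191398) * PowerSeries.X ^ 267 + (2629096583759205977369274563200882993530555541805103966325407) * PowerSeries.X ^ 271 + (10583075152801977765011988332940993701035043225793163210863600) * PowerSeries.X ^ 275 + (41058874506235109169823786132773016902471953008263664070505471) * PowerSeries.X ^ 279 + (152112166439229784968824187425459625626734523017334614868011569) * PowerSeries.X ^ 283 + (531189511034356990364096181422392280396288442333925710083495028) * PowerSeries.X ^ 287 + (1712306753891403181484409936639236628376881701253590930554896120) * PowerSeries.X ^ 291 + (4990004125505874108982972153685303869348615480645851223384224024) * PowerSeries.X ^ 295 + (12759656710820315084976009709468017443281864304776561560003339378) * PowerSeries.X ^ 299 + (27126412694173085053613479375973914228446398059014485160382019040)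 * PowerSeries.X ^ 303 + (37793690057838202472424510002200156050666441803217176108361559329) * PowerSeries.X ^ 307 + (-79380935997840299225661299632458568283107859414310266158988706517) * PowerSeries.X ^ 311 + (-1472296933739596187566971962554800475740202468577452594809247479534) * PowerSeries.X ^ 315 + (-13346501843377125088391419176088150688074520831343342014586706658127) * PowerSeries.X ^ 319 + (-97358896810683869636284384397442098885428582058642246011214323661523) * PowerSeries.X ^ 323 + (-598531325963543908765549285488456600476807196091319340744845654306487) * PowerSeries.X ^ 327 + (-3153311095058424255792726119552285598445227537559263582424891957748184) * PowerSeries.X ^ 331 + (-14386298685987848537764747232111133390025308266907100014194706381212883) * PowerSeries.X ^ 335 + (-56139208251761056043364569578350665697376415113979257127143547092392507) * PowerSeries.X ^ 339 + (-171444380212180664087369192815824906372358237087555369698903400106486130) * PowerSeries.X ^ 343 + (-257068848750490515050228166024148203966397527469018281724458801017439497) * PowerSeries.X ^ 347 + (1239644277284017897408094267350545507160661640192958343312725599327324543) * PowerSeries.X ^ 351 + (13833555154116489276978241854061902312610899639961880991336005272773794367) * PowerSeries.X ^ 355 + (77929477544044123207490341792583161017020087745357357963982553738783915703) * PowerSeries.X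 ^ 359 + (312960396035550312794433883947637675753001832095401666720786324749332326878) * PowerSeries.X ^ 363 + (878715029225256554139846105201900523405932640116442085501489894544025101957) * PowerSeries.X ^ 367 + (1055915210792327612224735585022854669332518938349998342893095103598641906894) * PowerSeries.X ^ 371 + (-5772625578321671945526501920631220378861530668822145877110580166712451202175) * PowerSeries.X ^ 375 + (-50822637837108338051552739409927724407306221604141888324826816692017537010923) * PowerSeries.X ^ 379 + (-243911694126465426929243051492304959289376010454366698413471907256711163010940) * PowerSeries.X ^ 383 + (-863561461699628198350572048606673144146316720766573969082929764565937963994296) * PowerSeries.X ^ 387 + (-1962093214610974254885542795684730869210791102747250013276690165595262798127132) * PowerSeries.X ^ 391 + (1395501428459672616749886499795804154828686756601999847842586020903041633330818) * PowerSeries.X ^ 395 + (40132579133938932246070307289355433184252688270582031335224032898777259060446525) * PowerSeries.X ^ 399 + (204874412311713432101176145782405968678851059711712105156855243165202684511486398) * PowerSeries.X ^ 403 + (576610458744759123113108826871605877409007194584306331346915680831350642294457187) * PowerSeries.X ^ 407 + (232834800509125387682892079208749097558020662875680417945844661897062454765607863) * PowerSeries.X ^ 411 + (-6593463327749828198969168071567932713175687908706152019928009231930496909569234800)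 * PowerSeries.X ^ 415 + (-34416581177434994675913050999431830235199929941674159665730255033210685814560444432) * PowerSeries.X ^ 419 + (-69454323386925888238951605286444482060031070209465867137139424564076601505531574954) * PowerSeries.X ^ 423 + (132138076327740861048325706772917532437742995028345494455500018788907055582287559896) * PowerSeries.X ^ 427 + (1267749968486915375276324802127526068691557166467501080718704780096523842330224015598) * PowerSeries.X ^ 431 + (2552583008943563539388200100837833678010837017045652848541644177609834334723664075021) * PowerSeries.X ^ 435 + (-5940523014211521332854070833008712509289440431434131776715646396589933030489328149517) * PowerSeries.X ^ 439 + (-33961786922711934633520199882775213657988085081255265115154068932746085639936533428530) * PowerSeries.X ^ 443 + (7895057552156457389590529473496309167358302658042414142919721587033612688169094420995) * PowerSeries.X ^ 447 + (218524292393840219030558657616731362315108901132646551483659560584913120199836798579405) * PowerSeries.X ^ 451 + (-244948570909442246371146686399377890114117279658413390438836342366896266602661763546287) * PowerSeries.X ^ 455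

noncomputable def sPC : PowerSeries ℚ := (PowerSeries.C (1)) * PowerSeries.X + (PowerSeries.C (1)) * PowerSeries.X ^ 5 + (PowerSeries.C (4)) * PowerSeries.X ^ 9 + (PowerSeries.C (21)) * PowerSeries.X ^ 13 + (PowerSeries.C (123)) * PowerSeries.X ^ 17 + (PowerSeries.C (759)) * PowerSeries.X ^ 21 + (PowerSeries.C (4797)) * PowerSeries.X ^ 25 + (PowerSeries.C (30504)) * PowerSeries.X ^ 29 + (PowerSeries.C (192372)) * PowerSeries.X ^ 33 + (PowerSeries.C (1184859)) * PowerSeries.X ^ 37 + (PowerSeries.C (6976277)) * PowerSeries.X ^ 41 + (PowerSeries.C (37759330)) * PowerSeries.X ^ 45 + (PowerSeries.C (170248455)) * PowerSeries.X ^ 49 + (PowerSeries.C (393521445)) * PowerSeries.X ^ 53 + (PowerSeries.C (-3969959727)) * PowerSeries.X ^ 57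


lemma hPC : sP = sPC := by
  unfold sP sPC
  simp only [map_ofNat, map_one, map_neg, Int.reduceNeg, neg_mul, one_mul]
  try ring

lemma h2 : sP * sP = sP2 := by unfold sP sP2; ring

lemma h4 : sP2 * sP2 = sP4 := by unfold sP2 sP4; ring

lemma h5 : sP4 * sP = sP5 := by unfold sP4 sP sP5; ring

lemma h8 : sP4 * sP4 = sP8 := by unfold sP4 sP8; ring

lemma h9 : sP8 * sP = sP9 := by unfold sP8 sP sP9; ring

lemma hmain : sP - sP ^ 5 + sP ^ 9 = PowerSeries.X + PowerSeries.X ^ 58 * sR := by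
  have e2 : sP ^ 2 = sP2 := by rw [sq, h2]
  have e4 : sP ^ 4 = sP4 := by rw [show (4:ℕ) = 2*2 from rfl, pow_mul, e2, sq, h4]
  have e5 : sP ^ 5 = sP5 := by rw [show (5:ℕ) = 4+1 from rfl, pow_succ, e4, h5]
  have e8 : sP ^ 8 = sP8 := by rw [show (8:ℕ) = 4*2 from rfl, pow_mul, e4, sq, h8]
  have e9 : sP ^ 9 = sP9 := by rw [show (9:ℕ) = 8+1 from rfl, pow_succ, e8, h9]
  rw [e5, e9]; unfold sP sP5 sP9 sR; ring

lemma hc0P : PowerSeries.constantCoeff sP = 0 := by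
  rw [hPC]; unfold sPC; simp

lemma hcoeffP (k : ℕ) : PowerSeries.coeff k sP =
    PowerSeries.coeff k sPC := by rw [hPC]

/-- Let `g = X - X⁵ + X⁹` over `ℚ` and let `f` be a power series with zero
constant coefficient such that substituting `f` into `g` (which gives `f - f⁵ + f⁹`)
yields `X`.  Then the coefficient of `f` at `X⁵⁷` is strictly negative while all
coefficients at `X^k` with `k < 57` are nonnegative. -/
theorem stmt_8 (f : PowerSeries ℚ) (hf0 : PowerSeries.constantCoeff f = 0)
    (hinv : f - f ^ 5 + f ^ 9 = PowerSeries.X) :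
    PowerSeries.coeff 57 f < 0 ∧ ∀ k : ℕ, k < 57 → 0 ≤ PowerSeries.coeff k f := by
  set A : PowerSeries ℚ := f^4 + f^3*sP + f^2*sP^2 + f*sP^3 + sP^4 with hA
  set B : PowerSeries ℚ := f^8 + f^7*sP + f^6*sP^2 + f^5*sP^3 + f^4*sP^4 + f^3*sP^5
    + f^2*sP^6 + f*sP^7 + sP^8 with hB
  have key : (f - sP) * (1 - A + B) = -(PowerSeries.X ^ 58 * sR) := by
    rw [hA, hB]
    linear_combination hinv - hmain
  have hu : IsUnit (1 - A + B) := by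
    rw [PowerSeries.isUnit_iff_constantCoeff]
    have : PowerSeries.constantCoeff (1 - A + B) = 1 := by
      rw [hA, hB]
      simp [map_add, map_sub, map_mul, map_pow, hf0, hc0P]
    rw [this]; exact isUnit_one
  obtain ⟨u, hu'⟩ := hu
  have hui : (1 - A + B) * (↑u⁻¹ : PowerSeries ℚ) = 1 := by
    rw [← hu']; exact u.mul_inv
  have hdvd : (PowerSeries.X : PowerSeries ℚ) ^ 58 ∣ f - sP := by
    refine ⟨-(sR * (↑u⁻¹ : PowerSeries ℚ)), ?_⟩
    calc f - sP = (f - sP) * ((1 - A + B) * (↑u⁻¹ : PowerSeries ℚ)) := by rw [hui, mul_one]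
      _ = ((f - sP) * (1 - A + B)) * (↑u⁻¹ : PowerSeries ℚ) := by ring
      _ = -(PowerSeries.X ^ 58 * sR) * (↑u⁻¹ : PowerSeries ℚ) := by rw [key]
      _ = PowerSeries.X ^ 58 * -(sR * (↑u⁻¹ : PowerSeries ℚ)) := by ring
  have hco : ∀ m : ℕ, m < 58 → PowerSeries.coeff m f = PowerSeries.coeff m sPC := by
    intro m hm
    have := (PowerSeries.X_pow_dvd_iff.mp hdvd) m hm
    rw [map_sub, sub_eq_zero] at this
    rw [this, hcoeffP]
  constructor
  · rw [hco 57 (by norm_num)]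
    unfold sPC
    simp [PowerSeries.coeff_C_mul, PowerSeries.coeff_X_pow, PowerSeries.coeff_X]
  · intro k hk
    rw [hco k (by omega)]
    unfold sPC
    interval_cases k <;>
      simp [PowerSeries.coeff_C_mul, PowerSeries.coeff_X_pow, PowerSeries.coeff_X]
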